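/- The T-gate channel on 2×2 density matrices admits the mixed-Clifford decomposition TσT† = (1/2)·IσI† + (1/√2)·SσS† + (1/2 - 1/√2)·ZσZ†, valid for all 2×2 matrices σ. -/

import Mathlib

open Matrix Complex
noncomputable def Tgate : Matrix (Fin 2) (Fin 2) ℂ :=
  !![1, 0; 0, Complex.exp (Real.pi * Complex.I / 4)]
noncomputable def Sgate : Matrix (Fin 2) (Fin 2) ℂ := !![1, 0; 0, Complex.I]
noncomputable def Zgate : Matrix (Fin 2) (Fin 2) ℂ := !![1, 0; 0, -1]
lemma hexp : Complex.exp (Real.pi * Complex.I / 4) =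
    ((Real.sqrt 2 / 2 : ℝ) : ℂ) + ((Real.sqrt 2 / 2 : ℝ) : ℂ) * Complex.I := by
  have : (Real.pi * Complex.I / 4) = ((Real.pi / 4 : ℝ) : ℂ) * Complex.I := by
    push_cast; ring
  rw [this, Complex.exp_mul_I, ← Complex.ofReal_cos, ← Complex.ofReal_sin,
    Real.cos_pi_div_four, Real.sin_pi_div_four]
theorem T_channel_decomposition (σ : Matrix (Fin 2) (Fin 2) ℂ) :
    Tgate * σ * Tgateᴴ =
      ((1 / 2 : ℝ) : ℂ) • ((1 : Matrix (Fin 2) (Fin 2) ℂ) * σ * (1 : Matrix (Fin 2) (Fin 2) ℂ)ᴴ) +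
      ((1 / Real.sqrt 2 : ℝ) : ℂ) • (Sgate * σ * Sgateᴴ) +
      ((1 / 2 - 1 / Real.sqrt 2 : ℝ) : ℂ) • (Zgate * σ * Zgateᴴ) := by
  have hs : ((Real.sqrt 2 : ℝ) : ℂ) * ((Real.sqrt 2 : ℝ) : ℂ) = 2 := by
    rw [← Complex.ofReal_mul, Real.mul_self_sqrt (by norm_num)]; norm_num
  have h2 : ((Real.sqrt 2 : ℝ) : ℂ) ≠ 0 := by
    simp [Real.sqrt_eq_zero']
  ext i j
  fin_cases i <;> fin_cases j <;>
    simp [Tgate, Sgate, Zgate, hexp, Matrix.mul_apply, Fin.sum_univ_two,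
      Matrix.conjTranspose_apply, Complex.conj_ofReal, map_div₀, Matrix.vecMul,
      dotProduct, Matrix.vecHead, Matrix.vecTail, Complex.I_sq, map_ofNat] <;>
    field_simp
  · ring
  · linear_combination (σ 0 1 * (1 - Complex.I)) * hs
  · linear_combination (σ 1 0 * (1 + Complex.I)) * hs
  · linear_combination (2 * ((Real.sqrt 2 : ℝ) : ℂ) * σ 1 1) * hs +
      ((-((Real.sqrt 2 : ℝ) : ℂ) ^ 3 + 4) * σ 1 1) * Complex.I_sq
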